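/- arXiv:2412.13269 — 4 statements merged into one kernel-verified Lean document; each statement's English description precedes it below -/
import Mathlib

section
/- Let N be a power of two, Q a positive integer, and R = (ZMod Q)[X]/(X^N + 1). For every odd integer i, the substitution X ↦ X^i induces a well-defined ring automorphism φ_i of R; moreover φ_i depends only on i modulo 2N, and for all odd integers i, j one has φ_i ∘ φ_j = φ_{i·j}. -/
open Polynomial AdjoinRoot

noncomputable section

/-- The negacyclic ring `(ZMod Q)[X]/(X^N + 1)`. -/
abbrev Rq (Q N : ℕ) := AdjoinRoot (X ^ N + 1 : (ZMod Q)[X])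

lemma monicXN (Q N : ℕ) (hN : 0 < N) : (X ^ N + 1 : (ZMod Q)[X]).Monic :=
  Polynomial.monic_X_pow_add (lt_of_le_of_lt Polynomial.degree_one_le (by exact_mod_cast hN))

/-- The `k`-th coefficient of the unique degree `< N` representative of `m`. -/
def coeffOf {Q N : ℕ} (hN : 0 < N) (m : Rq Q N) (k : ℕ) : ZMod Q :=
  ((AdjoinRoot.modByMonicHom (monicXN Q N hN)) m).coeff k

lemma root_pow_eq_neg_one (Q N : ℕ) :
    (root (X ^ N + 1 : (ZMod Q)[X])) ^ N = -1 := by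
  have h : (Polynomial.aeval (root (X ^ N + 1 : (ZMod Q)[X]))) (X ^ N + 1 : (ZMod Q)[X]) = 0 := by
    rw [AdjoinRoot.aeval_eq, AdjoinRoot.mk_self]
  simp only [map_add, map_pow, Polynomial.aeval_X, map_one] at h
  linear_combination h

lemma aeval_root_pow_odd (Q N : ℕ) {g : ℕ} (hg : Odd g) :
    (Polynomial.aeval ((root (X ^ N + 1 : (ZMod Q)[X])) ^ g)) (X ^ N + 1 : (ZMod Q)[X]) = 0 := by
  have h : ((root (X ^ N + 1 : (ZMod Q)[X])) ^ g) ^ N = -1 := by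
    rw [← pow_mul, mul_comm, pow_mul, root_pow_eq_neg_one, Odd.neg_one_pow hg]
  simp only [map_add, map_pow, Polynomial.aeval_X, map_one, h]
  ring

/-- The automorphism `φ_g : X ↦ X^g` of `(ZMod Q)[X]/(X^N+1)`, for `g` odd. -/
def phi (Q N : ℕ) (g : ℕ) (hg : Odd g) : Rq Q N →ₐ[ZMod Q] Rq Q N :=
  AdjoinRoot.liftAlgHom _ (Algebra.ofId (ZMod Q) (Rq Q N)) ((root (X ^ N + 1 : (ZMod Q)[X])) ^ g) (aeval_root_pow_odd Q N hg)

end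


section Aux
variable (Q N : ℕ)

lemma phi_root (g : ℕ) (hg : Odd g) :
    phi Q N g hg (root (X ^ N + 1 : (ZMod Q)[X])) = (root (X ^ N + 1 : (ZMod Q)[X])) ^ g :=
  AdjoinRoot.liftAlgHom_root _ _ _ _

lemma root_pow_two_N :
    (root (X ^ N + 1 : (ZMod Q)[X])) ^ (2 * N) = 1 := by
  rw [mul_comm, pow_mul, root_pow_eq_neg_one]
  ring

lemma root_pow_mod (i : ℕ) :
    (root (X ^ N + 1 : (ZMod Q)[X])) ^ i
      = (root (X ^ N + 1 : (ZMod Q)[X])) ^ (i % (2 * N)) := by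
  conv_lhs => rw [← Nat.div_add_mod i (2 * N)]
  rw [pow_add, pow_mul, root_pow_two_N, one_pow, one_mul]

lemma phi_congr (i j : ℕ) (hi : Odd i) (hj : Odd j)
    (h : i % (2 * N) = j % (2 * N)) : phi Q N i hi = phi Q N j hj := by
  apply AdjoinRoot.algHom_ext
  rw [phi_root, phi_root, root_pow_mod, h, ← root_pow_mod]

lemma phi_phi (i j : ℕ) (hi : Odd i) (hj : Odd j) (x : Rq Q N) :
    phi Q N i hi (phi Q N j hj x) = phi Q N (i * j) (hi.mul hj) x := by
  have : (phi Q N i hi).comp (phi Q N j hj) = phi Q N (i * j) (hi.mul hj) := by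
    apply AdjoinRoot.algHom_ext
    simp [phi_root, map_pow, ← pow_mul, mul_comm]
  exact DFunLike.congr_fun this x

lemma phi_one (x : Rq Q N) : phi Q N 1 odd_one x = x := by
  have : phi Q N 1 odd_one = AlgHom.id (ZMod Q) (Rq Q N) := by
    apply AdjoinRoot.algHom_ext
    simp [phi_root]
  rw [this]; rfl

end Aux

lemma exists_inverse (N : ℕ) (hNpow : ∃ k, N = 2 ^ k) {i : ℕ} (hi : Odd i) :
    ∃ j, Odd j ∧ (j * i) % (2 * N) = 1 % (2 * N) := by
  obtain ⟨k, rfl⟩ := hNpow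
  have hcop : Nat.Coprime i (2 * 2 ^ k) := by
    have : 2 * 2 ^ k = 2 ^ (k + 1) := by ring
    rw [this]
    exact (Nat.coprime_two_right.2 hi).pow_right _
  set M := 2 * 2 ^ k with hM
  haveI : NeZero M := ⟨by positivity⟩
  have hu : IsUnit (i : ZMod M) := (ZMod.isUnit_iff_coprime i M).2 hcop
  set u := (i : ZMod M)⁻¹ with hudef
  have hui : u * i = 1 := ZMod.inv_mul_of_unit _ hu
  have huunit : IsUnit u := IsUnit.of_mul_eq_one _ hui
  have hvc : ((u.val : ℕ) : ZMod M) = u := by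
    simp [ZMod.natCast_val, ZMod.cast_id]
  have hcop' : Nat.Coprime u.val M := by
    rw [← ZMod.isUnit_iff_coprime, hvc]; exact huunit
  refine ⟨u.val, ?_, ?_⟩
  · rcases Nat.even_or_odd u.val with he | ho
    · exfalso
      have h2 : 2 ∣ Nat.gcd u.val M :=
        Nat.dvd_gcd he.two_dvd ⟨2 ^ k, rfl⟩
      rw [hcop'] at h2
      omega
    · exact ho
  · have : ((u.val * i : ℕ) : ZMod M) = ((1 : ℕ) : ZMod M) := by
      push_cast [hvc]
      rw [hvc] at *
      simpa using hui
    exact (ZMod.natCast_eq_natCast_iff _ _ _).1 this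

/-- For every odd `i`, the substitution `X ↦ X^i` induces a well-defined ring automorphism
`φ_i` of `(ZMod Q)[X]/(X^N+1)`; moreover `φ_i` depends only on `i` modulo `2N`, and
`φ_i ∘ φ_j = φ_{i·j}`. -/
theorem substitution_automorphisms (N Q : ℕ) (hNpow : ∃ k, N = 2 ^ k) (hQ : 0 < Q) :
    ∃ Φ : ∀ i : ℕ, Odd i → (Rq Q N ≃+* Rq Q N),
      (∀ (i : ℕ) (hi : Odd i),
        Φ i hi (root (X ^ N + 1 : (ZMod Q)[X])) = (root (X ^ N + 1 : (ZMod Q)[X])) ^ i) ∧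
      (∀ (i j : ℕ) (hi : Odd i) (hj : Odd j),
        i % (2 * N) = j % (2 * N) → Φ i hi = Φ j hj) ∧
      (∀ (i j : ℕ) (hi : Odd i) (hj : Odd j) (x : Rq Q N),
        Φ i hi (Φ j hj x) = Φ (i * j) (hi.mul hj) x) := by
  choose inv hodd hmod using fun (i : ℕ) (hi : Odd i) => exists_inverse N hNpow hi
  refine ⟨fun i hi =>
    { toFun := phi Q N i hi
      invFun := phi Q N (inv i hi) (hodd i hi)
      left_inv := fun x => by
        rw [phi_phi, phi_congr Q N _ 1 _ odd_one (by simpa using hmod i hi), phi_one]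
      right_inv := fun x => by
        rw [phi_phi, phi_congr Q N _ 1 _ odd_one
          (by rw [mul_comm]; simpa using hmod i hi), phi_one]
      map_mul' := map_mul _
      map_add' := map_add _ }, ?_, ?_, ?_⟩
  · intro i hi
    exact phi_root Q N i hi
  · intro i j hi hj h
    exact RingEquiv.ext (fun x => DFunLike.congr_fun (phi_congr Q N i j hi hj h) x)
  · intro i j hi hj x
    exact phi_phi Q N i j hi hj x
end

section
/- Let N ≥ 2 be a power of two, Q a positive integer, R_{N/2} = (ZMod Q)[X]/(X^{N/2} + 1), R_N = (ZMod Q)[X]/(X^N + 1), and ι : R_{N/2} → R_N the ring homomorphism induced by X ↦ X². Suppose s ∈ R_{N/2} and C₀, C₁, M ∈ R_N satisfy C₀ + C₁·ι(s) = M, and write the unique even/odd decompositions C₀ = ι(c₀ᵉ) + X·ι(c₀ᵒ), C₁ = ι(c₁ᵉ) + X·ι(c₁ᵒ), M = ι(mᵉ) + X·ι(mᵒ) with c₀ᵉ, c₀ᵒ, c₁ᵉ, c₁ᵒ, mᵉ, mᵒ ∈ R_{N/2}. Then c₀ᵉ + c₁ᵉ·s = mᵉ and c₀ᵒ + c₁ᵒ·s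 = mᵒ in R_{N/2}. -/
open Polynomial AdjoinRoot

/-- Exact correctness of ring splitting: a dimension-`N` RLWE ciphertext `(C₀, C₁)`
encrypting `M` under `ι s = s(X²)` splits, via the even/odd decompositions
`C = ι(cᵉ) + X·ι(cᵒ)`, into two dimension-`N/2` ciphertexts encrypting the even and
odd parts of `M` under `s`. -/
theorem ring_splitting_exact (k N Q : ℕ) (hk : 1 ≤ k) (hN : N = 2 ^ k) (hQ : 0 < Q)
    (ι : Rq Q (N / 2) →+* Rq Q N)
    (hι : ι (root (X ^ (N / 2) + 1 : (ZMod Q)[X])) = (root (X ^ N + 1 : (ZMod Q)[X])) ^ 2)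
    (s c₀e c₀o c₁e c₁o me mo : Rq Q (N / 2)) (C₀ C₁ M : Rq Q N)
    (hC : C₀ + C₁ * ι s = M)
    (hC₀ : C₀ = ι c₀e + root (X ^ N + 1 : (ZMod Q)[X]) * ι c₀o)
    (hC₁ : C₁ = ι c₁e + root (X ^ N + 1 : (ZMod Q)[X]) * ι c₁o)
    (hM : M = ι me + root (X ^ N + 1 : (ZMod Q)[X]) * ι mo) :
    c₀e + c₁e * s = me ∧ c₀o + c₁o * s = mo := by
  by_cases hQ1 : Q = 1
  · subst hQ1
    haveI : Subsingleton (ZMod 1) := inferInstance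
    haveI : Subsingleton (Rq 1 (N / 2)) := Quotient.instSubsingletonQuotient _
    exact ⟨Subsingleton.elim _ _, Subsingleton.elim _ _⟩
  haveI : Fact (1 < Q) := ⟨by omega⟩
  haveI : Nontrivial (ZMod Q) := inferInstance
  have hn : 0 < N / 2 := by
    subst hN
    have h2 : 2 ≤ 2 ^ k := by
      calc 2 = 2 ^ 1 := rfl
        _ ≤ 2 ^ k := Nat.pow_le_pow_right (by norm_num) hk
    omega
  have hNpos : 0 < N := by subst hN; positivity
  have hNn : 2 * (N / 2) = N := by
    subst hN
    rw [Nat.mul_div_cancel' ⟨2 ^ (k - 1), by rw [← pow_succ']; congr 1; omega⟩]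
  set f : (ZMod Q)[X] := X ^ (N / 2) + 1 with hf
  set F : (ZMod Q)[X] := X ^ N + 1 with hF
  have hfm : f.Monic := monicXN Q (N / 2) hn
  have hFm : F.Monic := monicXN Q N hNpos
  -- ι agrees with evaluation at root^2
  have hconst : ∀ c : ZMod Q, ι (algebraMap (ZMod Q) (Rq Q (N / 2)) c)
      = algebraMap (ZMod Q) (Rq Q N) c := by
    intro c
    have := RingHom.ext_zmod (ι.comp (algebraMap (ZMod Q) (Rq Q (N / 2))))
      (algebraMap (ZMod Q) (Rq Q N))
    exact RingHom.congr_fun this c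
  have hι' : ∀ p : (ZMod Q)[X], ι (mk f p) = mk F (expand (ZMod Q) 2 p) := by
    intro p
    have h1 : ι (mk f p) = Polynomial.aeval ((root F) ^ 2) p := by
      rw [← AdjoinRoot.aeval_eq, Polynomial.aeval_def, Polynomial.aeval_def,
        Polynomial.hom_eval₂, hι,
        RingHom.ext_zmod (ι.comp (algebraMap (ZMod Q) (Rq Q (N / 2))))
          (algebraMap (ZMod Q) (Rq Q N))]
    rw [h1, ← Polynomial.expand_aeval, AdjoinRoot.aeval_eq]
  -- reduce to a single vanishing statement
  set a : Rq Q (N / 2) := c₀e + c₁e * s - me with ha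
  set b : Rq Q (N / 2) := c₀o + c₁o * s - mo with hb
  have key : ι a + root F * ι b = 0 := by
    have h := hC
    rw [hC₀, hC₁, hM] at h
    simp only [ha, hb, map_sub, map_add, map_mul]
    linear_combination h
  -- representatives
  set p : (ZMod Q)[X] := modByMonicHom hfm a with hp
  set q : (ZMod Q)[X] := modByMonicHom hfm b with hq
  have hap : mk f p = a := mk_leftInverse hfm a
  have hbq : mk f q = b := mk_leftInverse hfm b
  have hdegf : f.degree = ((N / 2 : ℕ) : WithBot ℕ) := by
    rw [hf]
    simpa using Polynomial.degree_X_pow_add_C (R := ZMod Q) hn 1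
  have hpd : p.degree < (N / 2 : ℕ) := by
    have hpe : p = p %ₘ f := by
      conv_lhs => rw [hp, ← hap, AdjoinRoot.modByMonicHom_mk]
    rw [hpe, ← hdegf]
    exact Polynomial.degree_modByMonic_lt p hfm
  have hqd : q.degree < (N / 2 : ℕ) := by
    have hqe : q = q %ₘ f := by
      conv_lhs => rw [hq, ← hbq, AdjoinRoot.modByMonicHom_mk]
    rw [hqe, ← hdegf]
    exact Polynomial.degree_modByMonic_lt q hfm
  -- the combined polynomial vanishes mod F
  have hcomb : mk F (expand (ZMod Q) 2 p + X * expand (ZMod Q) 2 q) = 0 := by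
    rw [map_add, map_mul, AdjoinRoot.mk_X, ← hι' p, ← hι' q, hap, hbq]
    exact key
  have hdvd : F ∣ expand (ZMod Q) 2 p + X * expand (ZMod Q) 2 q :=
    (AdjoinRoot.mk_eq_zero).mp hcomb
  -- degree bound forces the polynomial to be zero
  have hdegF : F.degree = (N : ℕ) := by
    rw [hF]; simpa using Polynomial.degree_X_pow_add_C (R := ZMod Q) hNpos 1
  have hdeg : (expand (ZMod Q) 2 p + X * expand (ZMod Q) 2 q).degree < ((N : ℕ) : WithBot ℕ) := by
    apply lt_of_le_of_lt (Polynomial.degree_add_le _ _)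
    apply max_lt
    · rcases eq_or_ne p 0 with h | h
      · simp [h]
      · have : (expand (ZMod Q) 2 p).degree = 2 * p.degree := by
          rw [Polynomial.degree_eq_natDegree (fun hc => h (by
            simpa [Polynomial.expand_eq_zero (by norm_num : 0 < 2)] using hc)),
            Polynomial.natDegree_expand, Polynomial.degree_eq_natDegree h]
          push_cast; ring_nf
        rw [this]
        have hpn : p.natDegree < N / 2 := by
          have := (Polynomial.degree_eq_natDegree h) ▸ hpd
          exact_mod_cast this
        rw [Polynomial.degree_eq_natDegree h]
        calc ((2 : WithBot ℕ) * p.natDegree) = ((2 * p.natDegree : ℕ) : WithBot ℕ) := by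
              push_cast; ring
          _ < ((N : ℕ) : WithBot ℕ) := by exact_mod_cast (by omega : 2 * p.natDegree < N)
    · rcases eq_or_ne q 0 with h | h
      · simp [h]
      · have hq0 : expand (ZMod Q) 2 q ≠ 0 := fun hc => h (by
          simpa [Polynomial.expand_eq_zero (by norm_num : 0 < 2)] using hc)
        have hqn : q.natDegree < N / 2 := by
          have := (Polynomial.degree_eq_natDegree h) ▸ hqd
          exact_mod_cast this
        calc (X * expand (ZMod Q) 2 q).degree ≤ 1 + (expand (ZMod Q) 2 q).degree := by
              simpa using Polynomial.degree_mul_le X (expand (ZMod Q) 2 q)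
          _ = ((1 + 2 * q.natDegree : ℕ) : WithBot ℕ) := by
              rw [Polynomial.degree_eq_natDegree hq0, Polynomial.natDegree_expand]
              push_cast; ring
          _ < ((N : ℕ) : WithBot ℕ) := by exact_mod_cast (by omega : 1 + 2 * q.natDegree < N)
  have hzero : expand (ZMod Q) 2 p + X * expand (ZMod Q) 2 q = 0 := by
    have h1 := (Polynomial.modByMonic_eq_zero_iff_dvd hFm).mpr hdvd
    have h2 := (Polynomial.modByMonic_eq_self_iff hFm).mpr (hdegF ▸ hdeg)
    rw [h2] at h1
    exact h1
  -- extract even and odd coefficients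
  have hp0 : p = 0 := by
    ext i
    have := congrArg (fun r => Polynomial.coeff r (2 * i)) hzero
    simp only [Polynomial.coeff_add, Polynomial.coeff_zero] at this
    have hXq : (X * expand (ZMod Q) 2 q).coeff (2 * i)
        = if 1 ≤ 2 * i then (expand (ZMod Q) 2 q).coeff (2 * i - 1) else 0 := by
      rw [← pow_one (X : (ZMod Q)[X]), Polynomial.coeff_X_pow_mul']
    rw [Polynomial.coeff_expand_mul' (by norm_num : 0 < 2), hXq] at this
    rcases Nat.eq_zero_or_pos i with hi | hi
    · subst hi; simpa using this
    · have h2i : 1 ≤ 2 * i := by omega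
      rw [if_pos h2i, Polynomial.coeff_expand (by norm_num : 0 < 2)] at this
      rw [if_neg (by omega : ¬ (2 ∣ 2 * i - 1))] at this
      simpa using this
  have hq0 : q = 0 := by
    ext i
    have := congrArg (fun r => Polynomial.coeff r (2 * i + 1)) hzero
    simp only [Polynomial.coeff_add, Polynomial.coeff_zero] at this
    rw [Polynomial.coeff_expand (by norm_num : 0 < 2),
      if_neg (by omega : ¬ (2 ∣ 2 * i + 1)), Polynomial.coeff_X_mul,
      Polynomial.coeff_expand_mul' (by norm_num : 0 < 2)] at this
    simpa using this
  have ha0 : a = 0 := by rw [← hap, hp0, map_zero]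
  have hb0 : b = 0 := by rw [← hbq, hq0, map_zero]
  constructor
  · have := ha0; rw [ha] at this; linear_combination this
  · have := hb0; rw [hb] at this; linear_combination this
end

section
/- Let R = (ZMod M)[X]/(X^N + 1) for N a power of two and M a positive integer, and let P be an integer. Let s, s' ∈ R, let w₀, …, w_{β−1} be integers (the decomposition basis), and for each 0 ≤ i < β let the key-switching key component be the pair (b_i, a_i) with b_i = −a_i·s' + e_i + (w_i·P)·s for some a_i, e_i ∈ R. Suppose d ∈ R decomposes as d = Σ_{i=0}^{β−1} w_i·d_i with d_i ∈ R. Then c₀ := Σ_i d_i·b_i and c₁ := Σ_i d_i·a_i satisfy c₀ + c₁·s' = P·d·s + Σ_{i=0}^{β−1} d_i·e_i in R. -/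
open Polynomial AdjoinRoot

/-- The exact algebraic identity underlying the correctness of the `SwitchKey`
operation: if each key-switching key component satisfies
`b_i = −a_i·s' + e_i + (w_i·P)·s` and `d = Σ w_i·d_i`, then the switched ciphertext
`(Σ d_i·b_i, Σ d_i·a_i)` decrypts under `s'` to `P·d·s + Σ d_i·e_i`. -/
theorem switch_key_identity (N M : ℕ) (hNpow : ∃ a, N = 2 ^ a) (hM : 0 < M)
    (P : ℤ) (β : ℕ) (w : Fin β → ℤ)
    (s s' : Rq M N) (a e dvec b : Fin β → Rq M N)
    (hb : ∀ i, b i = -(a i * s') + e i + ((w i * P : ℤ) : Rq M N) * s)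
    (d : Rq M N) (hd : d = ∑ i, ((w i : ℤ) : Rq M N) * dvec i) :
    (∑ i, dvec i * b i) + (∑ i, dvec i * a i) * s' =
      (P : Rq M N) * d * s + ∑ i, dvec i * e i := by
  subst hd
  simp only [hb, Finset.sum_mul, Finset.mul_sum, push_cast, Int.cast_mul, ← Finset.sum_add_distrib]
  apply Finset.sum_congr rfl
  intro i _
  push_cast
  ring
end

section
/- Let N be a power of two, Q a positive integer, and R = (ZMod Q)[X]/(X^N + 1). Given functions f_0, …, f_{m−1} : Fin N → ZMod Q, define u_{f_j} = f_j(0) − Σ_{i=1}^{N−1} f_j(N−i)·X^i ∈ R. Then for all inputs k_0, …, k_{m−1} ∈ Fin N, the constant coefficient of Σ_{j=0}^{m−1} X^{k_j} · u_{f_j} equals Σ_{j=0}^{m−1} f_j(k_j). -/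
open Polynomial AdjoinRoot
open Fin.NatCast

section Aux
variable {Q N : ℕ} (hN' : 0 < N)

lemma coeffOf_sum {ι} (s : Finset ι) (g : ι → Rq Q N) (k : ℕ) :
    coeffOf hN' (∑ j ∈ s, g j) k = ∑ j ∈ s, coeffOf hN' (g j) k := by
  simp [coeffOf, map_sum, Polynomial.finset_sum_coeff]

lemma coeffOf_sub (x y : Rq Q N) (k : ℕ) :
    coeffOf hN' (x - y) k = coeffOf hN' x k - coeffOf hN' y k := by
  simp [coeffOf, map_sub]

lemma coeffOf_alg_mul (r : ZMod Q) (x : Rq Q N) (k : ℕ) :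
    coeffOf hN' (algebraMap (ZMod Q) (Rq Q N) r * x) k = r * coeffOf hN' x k := by
  rw [← Algebra.smul_def]
  simp [coeffOf, map_smul]

lemma coeffOf_root_pow [Nontrivial (ZMod Q)] (e : ℕ) (he : e < N) :
    coeffOf hN' ((root (X ^ N + 1 : (ZMod Q)[X])) ^ e) 0 = if e = 0 then 1 else 0 := by
  have h1 : (root (X ^ N + 1 : (ZMod Q)[X])) ^ e = mk _ (X ^ e) := by
    rw [← AdjoinRoot.mk_X, ← map_pow]
  have hdeg : ((X : (ZMod Q)[X]) ^ N + 1).degree = N := by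
    have := Polynomial.degree_X_pow_add_C (R := ZMod Q) hN' 1
    simpa using this
  rw [coeffOf, h1, AdjoinRoot.modByMonicHom_mk]
  rw [(Polynomial.modByMonic_eq_self_iff (monicXN Q N hN')).2
    (by rw [hdeg, Polynomial.degree_X_pow]; exact_mod_cast he)]
  rw [Polynomial.coeff_X_pow]
  simp [eq_comm]

lemma root_pow_ge (e : ℕ) (he : N ≤ e) :
    (root (X ^ N + 1 : (ZMod Q)[X])) ^ e = -((root (X ^ N + 1 : (ZMod Q)[X])) ^ (e - N)) := by
  conv_lhs => rw [← Nat.sub_add_cancel he, pow_add, root_pow_eq_neg_one]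
  ring

lemma coeffOf_neg (x : Rq Q N) (k : ℕ) : coeffOf hN' (-x) k = -coeffOf hN' x k := by
  simp [coeffOf, map_neg]

lemma single_term [Nontrivial (ZMod Q)] [NeZero N] (f : Fin N → ZMod Q) (k : Fin N) :
    coeffOf hN' ((root (X ^ N + 1 : (ZMod Q)[X])) ^ (k : ℕ) *
      (algebraMap (ZMod Q) (Rq Q N) (f 0) -
        ∑ i ∈ Finset.Ico 1 N,
          algebraMap (ZMod Q) (Rq Q N) (f ((N - i : ℕ) : Fin N)) *
            (root (X ^ N + 1 : (ZMod Q)[X])) ^ i)) 0 = f k := by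
  set ρ := root (X ^ N + 1 : (ZMod Q)[X]) with hρ
  have hkN : (k : ℕ) < N := k.isLt
  rw [mul_sub, Finset.mul_sum, mul_comm (ρ ^ (k:ℕ)), coeffOf_sub, coeffOf_alg_mul, coeffOf_sum]
  have hterm : ∀ i ∈ Finset.Ico 1 N,
      coeffOf hN' (ρ ^ (k:ℕ) * (algebraMap (ZMod Q) (Rq Q N) (f ((N - i : ℕ) : Fin N)) * ρ ^ i)) 0
      = f ((N - i : ℕ) : Fin N) * coeffOf hN' (ρ ^ ((k:ℕ) + i)) 0 := by
    intro i _
    rw [mul_left_comm, ← pow_add, coeffOf_alg_mul]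
  rw [Finset.sum_congr rfl hterm]
  by_cases hk : (k : ℕ) = 0
  · have hk0 : k = 0 := Fin.ext (by simpa using hk)
    rw [coeffOf_root_pow hN' _ hkN, if_pos hk, mul_one,
      Finset.sum_eq_zero, sub_zero, hk0]
    intro i hi
    obtain ⟨hi1, hi2⟩ := Finset.mem_Ico.1 hi
    rw [hk, zero_add, coeffOf_root_pow hN' i hi2, if_neg (by omega), mul_zero]
  · rw [coeffOf_root_pow hN' _ hkN, if_neg hk, mul_zero, zero_sub,
      Finset.sum_eq_single (N - (k:ℕ))]
    · have hge : N ≤ (k:ℕ) + (N - (k:ℕ)) := by omega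
      rw [root_pow_ge _ hge, coeffOf_neg]
      have he : (k:ℕ) + (N - (k:ℕ)) - N = 0 := by omega
      rw [he, coeffOf_root_pow hN' 0 hN', if_pos rfl]
      have hNN : (N - (N - (k:ℕ)) : ℕ) = (k : ℕ) := by omega
      rw [hNN, Fin.cast_val_eq_self]
      ring
    · intro i hi hne
      obtain ⟨hi1, hi2⟩ := Finset.mem_Ico.1 hi
      by_cases hlt : (k:ℕ) + i < N
      · rw [coeffOf_root_pow hN' _ hlt, if_neg (by omega), mul_zero]
      · rw [root_pow_ge _ (by omega), coeffOf_neg,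
          coeffOf_root_pow hN' _ (by omega), if_neg (by omega)]
        ring
    · intro h
      exact absurd (Finset.mem_Ico.2 ⟨by omega, by omega⟩) h

end Aux

/-- Correctness of the aggregated encrypted score: summing the test-vector evaluations
`X^{k_j} · u_{f_j}` over the `m` scoring functions puts the total score
`Σ_j f_j(k_j)` in the constant coefficient. -/
theorem aggregated_score_constant_coeff (c N Q m : ℕ) (hN : N = 2 ^ c) (hQ : 0 < Q) [NeZero N]
    (f : Fin m → Fin N → ZMod Q) (u : Fin m → Rq Q N)
    (hu : ∀ j, u j = algebraMap (ZMod Q) (Rq Q N) (f j 0) -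
      ∑ i ∈ Finset.Ico 1 N,
        algebraMap (ZMod Q) (Rq Q N) (f j ((N - i : ℕ) : Fin N)) *
          (root (X ^ N + 1 : (ZMod Q)[X])) ^ i)
    (k : Fin m → Fin N) :
    coeffOf (hN ▸ Nat.two_pow_pos c)
        (∑ j, (root (X ^ N + 1 : (ZMod Q)[X])) ^ ((k j : ℕ)) * u j) 0 =
      ∑ j, f j (k j) := by
  cases subsingleton_or_nontrivial (ZMod Q) with
  | inl h => exact Subsingleton.elim _ _
  | inr h =>
    simp only [hu]
    rw [coeffOf_sum]
    exact Finset.sum_congr rfl fun j _ => single_term _ (f j) (k j)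
end
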